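/- (Theorem 2 of the paper.) Let f_1,…,f_K : E → ℝ be differentiable and L-smooth (L > 0). Let θ, d ∈ E and c_1,…,c_K ≥ 0 be such that ⟨∇f_k(θ), d⟩ = c_k · ‖d‖² for every k (in the AdaFed construction c_k = |f_k(θ)|^γ). If the step size η satisfies 0 ≤ η ≤ (2/L) · min_{k} c_k, then f_k(θ − η d) ≤ f_k(θ) for every k ∈ {1,…,K}. -/

import Mathlib

open RealInnerProductSpace Finset

lemma descent_lemma {E : Type*} [NormedAddCommGroup E] [InnerProductSpace ℝ E] [CompleteSpace E]
    (f : E → ℝ) (g : E → E) (hg : ∀ x, HasGradientAt f (g x) x)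
    (L : ℝ) (hL : 0 ≤ L) (hs : ∀ x y, ‖g x - g y‖ ≤ L * ‖x - y‖) (x y : E) :
    f y ≤ f x + ⟪g x, y - x⟫ + L / 2 * ‖y - x‖ ^ 2 := by
  set v := y - x with hv
  set φ : ℝ → ℝ := fun t => f (x + t • v) - t * ⟪g x, v⟫ - L / 2 * t ^ 2 * ‖v‖ ^ 2 with hφ
  have hc : ∀ t : ℝ, HasDerivAt (fun s : ℝ => x + s • v) v t := by
    intro t
    simpa using ((hasDerivAt_id t).smul_const v).const_add x
  have hder : ∀ t : ℝ, HasDerivAt φ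
      (⟪g (x + t • v), v⟫ - ⟪g x, v⟫ - L * t * ‖v‖ ^ 2) t := by
    intro t
    have h1 : HasDerivAt (fun s : ℝ => f (x + s • v)) ⟪g (x + t • v), v⟫ t := by
      have hf := (hasGradientAt_iff_hasFDerivAt.mp (hg (x + t • v))).comp_hasDerivAt t (hc t)
      exact hf
    have h2 : HasDerivAt (fun s : ℝ => s * ⟪g x, v⟫) ⟪g x, v⟫ t := by
      simpa using (hasDerivAt_id t).mul_const (⟪g x, v⟫ : ℝ)
    have h3 : HasDerivAt (fun s : ℝ => L / 2 * s ^ 2 * ‖v‖ ^ 2) (L * t * ‖v‖ ^ 2) t := by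
      have := (((hasDerivAt_pow 2 t).const_mul (L / 2)).mul_const (‖v‖ ^ 2))
      convert this using 1
      · rfl
      · rfl
      ring
    exact (h1.sub h2).sub h3
  have hcont : Continuous φ := by
    have : Differentiable ℝ φ := fun t => (hder t).differentiableAt
    exact this.continuous
  have hanti : AntitoneOn φ (Set.Icc 0 1) := by
    apply antitoneOn_of_deriv_nonpos (convex_Icc 0 1) (hcont.continuousOn)
    · intro t _
      exact (hder t).differentiableAt.differentiableWithinAt
    · intro t ht
      rw [interior_Icc] at ht
      rw [(hder t).deriv]
      have hb : ⟪g (x + t • v) - g x, v⟫ ≤ L * t * ‖v‖ ^ 2 := by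
        calc ⟪g (x + t • v) - g x, v⟫ ≤ ‖g (x + t • v) - g x‖ * ‖v‖ :=
              real_inner_le_norm _ _
          _ ≤ (L * ‖(x + t • v) - x‖) * ‖v‖ := by
              exact mul_le_mul_of_nonneg_right (hs _ _) (norm_nonneg _)
          _ = L * t * ‖v‖ ^ 2 := by
              simp [norm_smul, abs_of_nonneg ht.1.le]
              ring
      have := sub_nonpos.mpr hb
      rw [inner_sub_left] at this
      linarith
  have h01 := hanti (Set.mem_Icc.mpr ⟨le_refl 0, zero_le_one⟩)
      (Set.mem_Icc.mpr ⟨zero_le_one, le_refl 1⟩) zero_le_one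
  simp only [hφ, one_smul, zero_smul, add_zero, one_pow, zero_pow, one_mul, mul_zero,
    zero_mul, sub_zero] at h01
  have : x + v = y := by rw [hv]; abel
  rw [this] at h01
  linarith

/-- Theorem 2 of the paper: if each `f k` is differentiable with `L`-Lipschitz
gradient, `⟪∇f k (θ), d⟫ = c k * ‖d‖²` with `c k ≥ 0`, and the step size
satisfies `0 ≤ η ≤ (2/L) * min_k c k`, then `f k (θ - η • d) ≤ f k θ` for all `k`. -/
theorem adafed_theorem2 {E : Type*} [NormedAddCommGroup E] [InnerProductSpace ℝ E] [CompleteSpace E]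
    {K : ℕ} (hK : 0 < K) (f : Fin K → E → ℝ) (grad : Fin K → E → E)
    (hgrad : ∀ k x, HasGradientAt (f k) (grad k x) x)
    (L : ℝ) (hL : 0 < L)
    (hsmooth : ∀ k x y, ‖grad k x - grad k y‖ ≤ L * ‖x - y‖)
    (θ d : E) (c : Fin K → ℝ) (hc : ∀ k, 0 ≤ c k)
    (hinner : ∀ k, ⟪grad k θ, d⟫ = c k * ‖d‖ ^ 2)
    (η : ℝ) (hη0 : 0 ≤ η) (hη : η ≤ 2 / L * ⨅ k, c k) :
    ∀ k, f k (θ - η • d) ≤ f k θ := by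
  intro k
  haveI : Nonempty (Fin K) := ⟨⟨0, hK⟩⟩
  have hinf : (⨅ k, c k) ≤ c k := ciInf_le (Finite.bddBelow_range c) k
  have hηc : η * L ≤ 2 * c k := by
    have h := mul_le_mul_of_nonneg_right hη hL.le
    have he : 2 / L * (⨅ k, c k) * L = 2 * ⨅ k, c k := by field_simp
    rw [he] at h
    linarith
  have hd := descent_lemma (f k) (grad k) (hgrad k) L hL.le (hsmooth k) θ (θ - η • d)
  have hsub : θ - η • d - θ = -(η • d) := by abel
  rw [hsub] at hd
  have hi : ⟪grad k θ, -(η • d)⟫ = -(η * (c k * ‖d‖ ^ 2)) := by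
    rw [inner_neg_right, real_inner_smul_right, hinner k]
  rw [hi] at hd
  have hn : ‖-(η • d)‖ ^ 2 = η ^ 2 * ‖d‖ ^ 2 := by
    rw [norm_neg, norm_smul]
    simp [abs_of_nonneg hη0]
    ring
  rw [hn] at hd
  have hkey : L / 2 * (η ^ 2 * ‖d‖ ^ 2) ≤ η * (c k * ‖d‖ ^ 2) := by
    have h1 : L / 2 * η ≤ c k := by linarith [hηc]
    have h2 : 0 ≤ η * ‖d‖ ^ 2 := mul_nonneg hη0 (by positivity)
    calc L / 2 * (η ^ 2 * ‖d‖ ^ 2) = (L / 2 * η) * (η * ‖d‖ ^ 2) := by ring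
      _ ≤ c k * (η * ‖d‖ ^ 2) := mul_le_mul_of_nonneg_right h1 h2
      _ = η * (c k * ‖d‖ ^ 2) := by ring
  linarith
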